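/- Let β ∈ (1,2), a > 0, and let C₃ > 0 be a constant such that s^{β−1} E_{β,β}(p² s^β) ≤ C₃ exp(p^{2/β} s) for every integer p ≥ 1 and every s ∈ [0, a]. Fix U ∈ ℓ² and define the map H on C([0,a]; ℓ²) coordinatewise by (Hv)(t)_p = E_{β,1}(p² t^β) U_p + ∫_0^t (t−η)^{β−1} E_{β,β}(p² (t−η)^β) · (exp(p^{2/β}(η − a)) / (2 a C₃)) · v(η)_p dη. Then for all v₁, v₂ ∈ C([0,a]; ℓ²) one has ‖H v₁ − H v₂‖_C ≤ (1/2) ‖v₁ − v₂‖_C; consequently H has a unique fixed point V ∈ C([0,a]; ℓ²). -/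

import Mathlib

open Real MeasureTheory
open scoped ENNReal NNReal

/-- The Mittag-Leffler function `E_{β,γ}(z) = ∑_{k=0}^∞ z^k / Γ(βk + γ)` for real `z`. -/
noncomputable def mittagLeffler (β γ z : ℝ) : ℝ :=
  ∑' k : ℕ, z ^ k / Real.Gamma (β * k + γ)

lemma mittagLeffler_nonneg {β γ z : ℝ} (hβ : 0 < β) (hγ : 0 < γ) (hz : 0 ≤ z) :
    0 ≤ mittagLeffler β γ z :=
  tsum_nonneg fun k => div_nonneg (pow_nonneg hz k)
    (Real.Gamma_pos_of_pos (by positivity)).le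

noncomputable def mlAux (β γ c : ℝ) : ℝ → ℝ := fun x =>
  (∑' k : ℕ, ENNReal.ofReal ((c * x ^ β) ^ k / Real.Gamma (β * k + γ))).toReal

lemma mlAux_eq {β γ c : ℝ} (hβ : 0 < β) (hγ : 0 < γ) (hc : 0 ≤ c) {x : ℝ} (hx : 0 ≤ x) :
    mlAux β γ c x = mittagLeffler β γ (c * x ^ β) := by
  have hz : 0 ≤ c * x ^ β := mul_nonneg hc (Real.rpow_nonneg hx β)
  have hterm : ∀ k : ℕ, 0 ≤ (c * x ^ β) ^ k / Real.Gamma (β * k + γ) := fun k =>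
    div_nonneg (pow_nonneg hz k) (Real.Gamma_pos_of_pos (by positivity)).le
  unfold mlAux mittagLeffler
  rw [ENNReal.tsum_toReal_eq fun k => ENNReal.ofReal_ne_top]
  exact tsum_congr fun k => ENNReal.toReal_ofReal (hterm k)

lemma mlAux_measurable (β γ c : ℝ) (hβ : 0 ≤ β) : Measurable (mlAux β γ c) := by
  apply Measurable.ennreal_toReal
  apply Measurable.ennreal_tsum
  intro k
  have hcont : Continuous fun x : ℝ => (c * x ^ β) ^ k / Real.Gamma (β * k + γ) :=
    ((continuous_const.mul (Real.continuous_rpow_const hβ)).pow k).div_const _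
  exact ENNReal.measurable_ofReal.comp hcont.measurable

lemma lp_eval_continuous (p : ℕ+) :
    Continuous fun x : lp (fun _ : ℕ+ => ℝ) 2 => x p := by
  have h : LipschitzWith 1 fun x : lp (fun _ : ℕ+ => ℝ) 2 => x p := by
    apply LipschitzWith.of_dist_le_mul
    intro x y
    simp only [NNReal.coe_one, one_mul, dist_eq_norm]
    have : x p - y p = (x - y) p := by simp
    rw [this]
    exact lp.norm_apply_le_norm two_ne_zero (x - y) p

  exact h.continuous

lemma lp_normsq (z : lp (fun _ : ℕ+ => ℝ) 2) :
    ‖z‖ ^ 2 = ∑' p : ℕ+, ‖z p‖ ^ 2 ∧ Summable fun p : ℕ+ => ‖z p‖ ^ 2 := by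
  have h2 : (0:ℝ) < (2 : ℝ≥0∞).toReal := by norm_num
  have h := lp.norm_rpow_eq_tsum h2 z
  have hs := (lp.memℓp z).summable h2
  constructor
  · have : (‖z‖ : ℝ) ^ ((2:ℝ≥0∞).toReal) = ∑' p : ℕ+, ‖z p‖ ^ ((2:ℝ≥0∞).toReal) := h
    simpa [ENNReal.toReal_ofNat, Real.rpow_natCast] using this
  · simpa [ENNReal.toReal_ofNat, Real.rpow_natCast] using hs

/-- with `β ∈ (1,2)`, `a > 0`, a constant `C₃ > 0` such that
`s^{β−1} E_{β,β}(p² s^β) ≤ C₃ exp(p^{2/β} s)` for all integers `p ≥ 1` and `s ∈ [0,a]`,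
`U ∈ ℓ²`, and `H` on `C([0,a]; ℓ²)` given coordinatewise by
`(Hv)(t)_p = E_{β,1}(p² t^β) U_p + ∫_0^t (t−η)^{β−1} E_{β,β}(p²(t−η)^β)
  · (exp(p^{2/β}(η−a))/(2aC₃)) · v(η)_p dη`,
`H` is a `1/2`-contraction and has a unique fixed point. -/
theorem contraction_of_illposedness_map (β a C₃ : ℝ) (hβ1 : 1 < β) (hβ2 : β < 2) (ha : 0 < a)
    (hC₃ : 0 < C₃)
    (hC₃bound : ∀ p : ℕ+, ∀ s ∈ Set.Icc (0 : ℝ) a,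
      s ^ (β - 1) * mittagLeffler β β ((p : ℝ) ^ 2 * s ^ β) ≤
        C₃ * Real.exp ((p : ℝ) ^ (2 / β) * s))
    (U : lp (fun _ : ℕ+ => ℝ) 2)
    (H : C(Set.Icc (0 : ℝ) a, lp (fun _ : ℕ+ => ℝ) 2) →
         C(Set.Icc (0 : ℝ) a, lp (fun _ : ℕ+ => ℝ) 2))
    (hH : ∀ v : C(Set.Icc (0 : ℝ) a, lp (fun _ : ℕ+ => ℝ) 2),
      ∀ t : Set.Icc (0 : ℝ) a, ∀ p : ℕ+,
        H v t p = mittagLeffler β 1 ((p : ℝ) ^ 2 * (t : ℝ) ^ β) * U p +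
          ∫ η in (0 : ℝ)..(t : ℝ),
            ((t : ℝ) - η) ^ (β - 1) * mittagLeffler β β ((p : ℝ) ^ 2 * ((t : ℝ) - η) ^ β) *
              (Real.exp ((p : ℝ) ^ (2 / β) * (η - a)) / (2 * a * C₃)) *
              v (Set.projIcc 0 a ha.le η) p) :
    (∀ v₁ v₂ : C(Set.Icc (0 : ℝ) a, lp (fun _ : ℕ+ => ℝ) 2),
      ‖H v₁ - H v₂‖ ≤ (1 / 2) * ‖v₁ - v₂‖) ∧
    (∃! V : C(Set.Icc (0 : ℝ) a, lp (fun _ : ℕ+ => ℝ) 2), H V = V) := by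
  haveI : Nonempty (Set.Icc (0:ℝ) a) := ⟨⟨0, Set.left_mem_Icc.2 ha.le⟩⟩
  have key : ∀ v₁ v₂ : C(Set.Icc (0 : ℝ) a, lp (fun _ : ℕ+ => ℝ) 2),
      ‖H v₁ - H v₂‖ ≤ (1 / 2) * ‖v₁ - v₂‖ := by
    intro v₁ v₂
    set w : C(Set.Icc (0 : ℝ) a, lp (fun _ : ℕ+ => ℝ) 2) := v₁ - v₂ with hw
    set M : ℝ := ‖w‖ with hMdef
    have hM0 : 0 ≤ M := norm_nonneg _
    rw [ContinuousMap.norm_le _ (by positivity)]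
    intro t
    set T : ℝ := (t : ℝ) with hTdef
    have ht0 : 0 ≤ T := t.2.1
    have hta : T ≤ a := t.2.2
    set x : lp (fun _ : ℕ+ => ℝ) 2 := H v₁ t - H v₂ t with hx
    have hgoal : (H v₁ - H v₂) t = x := by simp [hx]
    rw [hgoal]
    -- coordinate functions
    set g : ℕ+ → ℝ → ℝ := fun p η => w (Set.projIcc 0 a ha.le η) p with hg
    set K : ℕ+ → ℝ → ℝ := fun p η =>
      (T - η) ^ (β - 1) * mittagLeffler β β ((p : ℝ) ^ 2 * (T - η) ^ β) *
        (Real.exp ((p : ℝ) ^ (2 / β) * (η - a)) / (2 * a * C₃)) with hK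
    have hgc : ∀ p : ℕ+, Continuous (g p) := fun p =>
      (lp_eval_continuous p).comp (w.continuous.comp continuous_projIcc)
    have hgM : ∀ p : ℕ+, ∀ η : ℝ, |g p η| ≤ M := by
      intro p η
      have h1 : |g p η| = ‖(w (Set.projIcc 0 a ha.le η)) p‖ := rfl
      rw [h1]
      exact (lp.norm_apply_le_norm two_ne_zero _ p).trans
        (ContinuousMap.norm_coe_le_norm w _)
    have hKb : ∀ p : ℕ+, ∀ η ∈ Set.Ioc (0:ℝ) T, 0 ≤ K p η ∧ K p η ≤ 1/(2*a) := by
      intro p η hη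
      have hs0 : 0 ≤ T - η := by linarith [hη.2]
      have hsa : T - η ≤ a := by linarith [hη.1]
      have hβ0 : (0:ℝ) < β := by linarith
      have hML : 0 ≤ mittagLeffler β β ((p : ℝ) ^ 2 * (T - η) ^ β) :=
        mittagLeffler_nonneg hβ0 hβ0
          (mul_nonneg (by positivity) (Real.rpow_nonneg hs0 β))
      have hrp : 0 ≤ ((p:ℝ)) ^ (2/β) := Real.rpow_nonneg (by positivity) _
      constructor
      · exact mul_nonneg (mul_nonneg (Real.rpow_nonneg hs0 _) hML) (by positivity)
      · have hb := hC₃bound p (T - η) ⟨hs0, hsa⟩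
        have hexp1 : Real.exp ((p:ℝ) ^ (2/β) * (T - a)) ≤ 1 :=
          Real.exp_le_one_iff.2 (mul_nonpos_iff.2 (Or.inl ⟨hrp, by linarith⟩))
        calc K p η
            = ((T - η) ^ (β - 1) * mittagLeffler β β ((p : ℝ) ^ 2 * (T - η) ^ β)) *
              (Real.exp ((p : ℝ) ^ (2 / β) * (η - a)) / (2 * a * C₃)) := by
              simp [hK, mul_assoc]
          _ ≤ (C₃ * Real.exp ((p : ℝ) ^ (2 / β) * (T - η))) *
              (Real.exp ((p : ℝ) ^ (2 / β) * (η - a)) / (2 * a * C₃)) :=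
              mul_le_mul_of_nonneg_right hb (by positivity)
          _ = Real.exp ((p : ℝ) ^ (2 / β) * (T - η) + (p : ℝ) ^ (2 / β) * (η - a)) / (2 * a) := by
              rw [Real.exp_add]; field_simp
          _ = Real.exp ((p : ℝ) ^ (2 / β) * (T - a)) / (2 * a) := by
              congr 1; ring
          _ ≤ 1 / (2 * a) := by gcongr
    -- integrability of integrands
    have hint : ∀ (v : C(Set.Icc (0:ℝ) a, lp (fun _ : ℕ+ => ℝ) 2)) (p : ℕ+),
        IntervalIntegrable (fun η : ℝ =>
          (T - η) ^ (β - 1) * mittagLeffler β β ((p : ℝ) ^ 2 * (T - η) ^ β) *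
            (Real.exp ((p : ℝ) ^ (2 / β) * (η - a)) / (2 * a * C₃)) *
            v (Set.projIcc 0 a ha.le η) p) volume 0 T := by
      intro v p
      rw [intervalIntegrable_iff_integrableOn_Ioc_of_le ht0]
      have hvc : Continuous fun η : ℝ => (v (Set.projIcc 0 a ha.le η)) p :=
        (lp_eval_continuous p).comp (v.continuous.comp continuous_projIcc)
      have hvM : ∀ η : ℝ, ‖(v (Set.projIcc 0 a ha.le η)) p‖ ≤ ‖v‖ := fun η =>
        (lp.norm_apply_le_norm two_ne_zero _ p).trans (ContinuousMap.norm_coe_le_norm v _)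
      have hmb : Measurable fun η : ℝ =>
          (T - η) ^ (β - 1) * mlAux β β ((p:ℝ)^2) (T - η) *
            (Real.exp ((p:ℝ) ^ (2/β) * (η - a)) / (2 * a * C₃)) := by
        have hm1 : Measurable fun η : ℝ => (T - η) ^ (β - 1) :=
          ((Real.continuous_rpow_const (by linarith)).comp
            (continuous_const.sub continuous_id)).measurable
        have hm2 : Measurable fun η : ℝ => mlAux β β ((p:ℝ)^2) (T - η) :=
          (mlAux_measurable β β _ (by linarith)).comp
            (continuous_const.sub continuous_id).measurable
        have hm3 : Measurable fun η : ℝ =>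
            Real.exp ((p:ℝ) ^ (2/β) * (η - a)) / (2 * a * C₃) :=
          ((Real.continuous_exp.comp
            (continuous_const.mul (continuous_id.sub continuous_const))).div_const _).measurable
        exact (hm1.mul hm2).mul hm3
      have haesm : AEStronglyMeasurable (fun η : ℝ =>
          (T - η) ^ (β - 1) * mittagLeffler β β ((p : ℝ) ^ 2 * (T - η) ^ β) *
            (Real.exp ((p : ℝ) ^ (2 / β) * (η - a)) / (2 * a * C₃)) *
            v (Set.projIcc 0 a ha.le η) p)
          (volume.restrict (Set.Ioc 0 T)) := by
        refine AEStronglyMeasurable.congr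
          ((hmb.mul hvc.measurable).aestronglyMeasurable) ?_
        rw [Filter.EventuallyEq, ae_restrict_iff' measurableSet_Ioc]
        refine ae_of_all _ fun η hη => ?_
        have h1 : (0:ℝ) ≤ T - η := by linarith [hη.2]
        simp only [Pi.mul_apply]
        rw [mlAux_eq (by linarith) (by linarith) (by positivity) h1]
      refine Integrable.mono' (g := fun _ => (1/(2*a)) * ‖v‖)
        (integrableOn_const measure_Ioc_lt_top.ne) haesm ?_
      rw [ae_restrict_iff' measurableSet_Ioc]
      refine ae_of_all _ fun η hη => ?_
      have hKη := hKb p η hη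
      have hKeq : K p η = (T - η) ^ (β - 1) * mittagLeffler β β ((p : ℝ) ^ 2 * (T - η) ^ β) *
          (Real.exp ((p : ℝ) ^ (2 / β) * (η - a)) / (2 * a * C₃)) := rfl
      show ‖K p η * v (Set.projIcc 0 a ha.le η) p‖ ≤ (1/(2*a)) * ‖v‖
      rw [norm_mul, Real.norm_of_nonneg hKη.1]
      exact mul_le_mul hKη.2 (hvM η) (norm_nonneg _) (by positivity)
    -- coordinatewise bound
    have hcoord : ∀ p : ℕ+, ‖x p‖ ≤ (1/(2*a)) * ∫ η in Set.Ioc (0:ℝ) T, |g p η| := by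
      intro p
      have hxp : x p = ∫ η in (0:ℝ)..T, K p η * g p η := by
        have hdiff : x p = H v₁ t p - H v₂ t p := by
          simp [hx, lp.coeFn_sub]
        rw [hdiff, hH v₁ t p, hH v₂ t p]
        rw [← hTdef, add_sub_add_left_eq_sub,
          ← intervalIntegral.integral_sub (hint v₁ p) (hint v₂ p)]
        congr 1
        funext η
        simp only [hK, hg, hw, ContinuousMap.sub_apply, lp.coeFn_sub, Pi.sub_apply, mul_sub]
      rw [hxp]
      have hbd : ∀ᵐ η ∂(volume.restrict (Set.uIoc (0:ℝ) T)),
          ‖K p η * g p η‖ ≤ (1/(2*a)) * |g p η| := by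
        rw [Set.uIoc_of_le ht0, ae_restrict_iff' measurableSet_Ioc]
        refine ae_of_all _ fun η hη => ?_
        rw [norm_mul, Real.norm_of_nonneg (hKb p η hη).1, Real.norm_eq_abs]
        exact mul_le_mul_of_nonneg_right (hKb p η hη).2 (abs_nonneg _)
      have hintb : IntervalIntegrable (fun η => (1/(2*a)) * |g p η|) volume 0 T :=
        (continuous_const.mul ((hgc p).abs)).intervalIntegrable 0 T
      have h2 := intervalIntegral.norm_integral_le_of_norm_le ht0
        (by rw [Set.uIoc_of_le ht0, ae_restrict_iff' measurableSet_Ioc] at hbd; exact hbd) hintb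
      rw [intervalIntegral.integral_const_mul, intervalIntegral.integral_of_le ht0,
        intervalIntegral.integral_of_le ht0] at h2
      rw [intervalIntegral.integral_of_le ht0]
      have hnn : 0 ≤ (1/(2*a)) * ∫ η in Set.Ioc (0:ℝ) T, |g p η| :=
        mul_nonneg (by positivity) (integral_nonneg fun η => abs_nonneg _)
      exact h2
    -- Cauchy-Schwarz
    have hT2 : (volume.restrict (Set.Ioc (0:ℝ) T)) Set.univ = ENNReal.ofReal T := by
      rw [Measure.restrict_apply_univ, Real.volume_Ioc, sub_zero]
    haveI : IsFiniteMeasure (volume.restrict (Set.Ioc (0:ℝ) T)) :=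
      ⟨by rw [hT2]; exact ENNReal.ofReal_lt_top⟩
    have hrpow2 : ∀ y : ℝ, |y| ^ (2:ℝ) = y^2 := fun y => by
      rw [show (2:ℝ) = ((2:ℕ):ℝ) by norm_num, Real.rpow_natCast, sq_abs]
    have hCS : ∀ p : ℕ+, (∫ η in Set.Ioc (0:ℝ) T, |g p η|)^2 ≤
        T * ∫ η in Set.Ioc (0:ℝ) T, (g p η)^2 := by
      intro p
      have hpq : Real.HolderConjugate 2 2 := Real.HolderConjugate.two_two
      have hf : MemLp (fun η => |g p η|) (ENNReal.ofReal 2)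
          (volume.restrict (Set.Ioc (0:ℝ) T)) :=
        MemLp.of_bound ((hgc p).abs.aestronglyMeasurable) M
          (ae_of_all _ fun η => by rw [Real.norm_eq_abs, abs_abs]; exact hgM p η)
      have h1 : MemLp (fun _ : ℝ => (1:ℝ)) (ENNReal.ofReal 2)
          (volume.restrict (Set.Ioc (0:ℝ) T)) := memLp_const 1
      have happ := integral_mul_le_Lp_mul_Lq_of_nonneg hpq
        (ae_of_all _ fun η => abs_nonneg (g p η)) (ae_of_all _ fun _ => zero_le_one) hf h1
      simp only [mul_one, Real.one_rpow, hrpow2] at happ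
      rw [integral_const, measureReal_def, hT2, ENNReal.toReal_ofReal ht0, smul_eq_mul, mul_one] at happ
      have hg2nn : 0 ≤ ∫ η in Set.Ioc (0:ℝ) T, (g p η)^2 :=
        integral_nonneg fun η => sq_nonneg _
      calc (∫ η in Set.Ioc (0:ℝ) T, |g p η|)^2
          ≤ ((∫ η in Set.Ioc (0:ℝ) T, (g p η)^2)^(1/2:ℝ) * T^(1/2:ℝ))^2 :=
            pow_le_pow_left₀ (integral_nonneg fun η => abs_nonneg _) happ 2
        _ = (∫ η in Set.Ioc (0:ℝ) T, (g p η)^2) * T := by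
            rw [mul_pow, ← Real.rpow_natCast (_ ^ (1/2:ℝ)) 2,
              ← Real.rpow_natCast (T ^ (1/2:ℝ)) 2,
              ← Real.rpow_mul hg2nn, ← Real.rpow_mul ht0]
            norm_num
        _ = T * ∫ η in Set.Ioc (0:ℝ) T, (g p η)^2 := mul_comm _ _
    -- integrability of squares
    have hg2int : ∀ p : ℕ+, IntegrableOn (fun η => (g p η)^2) (Set.Ioc (0:ℝ) T) volume := by
      intro p
      rw [← intervalIntegrable_iff_integrableOn_Ioc_of_le ht0]
      exact ((hgc p).pow 2).intervalIntegrable 0 T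
    -- summation over finite sets
    have hsumle : ∀ s : Finset ℕ+, ∑ p ∈ s, ‖x p‖^2 ≤ (1/2 * M)^2 := by
      intro s
      have step1 : ∀ p ∈ s, ‖x p‖^2 ≤
          (1/(2*a))^2 * (T * ∫ η in Set.Ioc (0:ℝ) T, (g p η)^2) := by
        intro p _
        have h2 : ‖x p‖^2 ≤ ((1/(2*a)) * ∫ η in Set.Ioc (0:ℝ) T, |g p η|)^2 :=
          pow_le_pow_left₀ (norm_nonneg _) (hcoord p) 2
        calc ‖x p‖^2 ≤ ((1/(2*a)) * ∫ η in Set.Ioc (0:ℝ) T, |g p η|)^2 := h2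
          _ = (1/(2*a))^2 * (∫ η in Set.Ioc (0:ℝ) T, |g p η|)^2 := by ring
          _ ≤ (1/(2*a))^2 * (T * ∫ η in Set.Ioc (0:ℝ) T, (g p η)^2) :=
            mul_le_mul_of_nonneg_left (hCS p) (by positivity)
      have step2 : ∑ p ∈ s, ‖x p‖^2 ≤
          (1/(2*a))^2 * (T * ∑ p ∈ s, ∫ η in Set.Ioc (0:ℝ) T, (g p η)^2) := by
        calc ∑ p ∈ s, ‖x p‖^2
            ≤ ∑ p ∈ s, (1/(2*a))^2 * (T * ∫ η in Set.Ioc (0:ℝ) T, (g p η)^2) :=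
              Finset.sum_le_sum step1
          _ = (1/(2*a))^2 * (T * ∑ p ∈ s, ∫ η in Set.Ioc (0:ℝ) T, (g p η)^2) := by
              rw [← Finset.mul_sum, ← Finset.mul_sum]
      have step3 : ∑ p ∈ s, ∫ η in Set.Ioc (0:ℝ) T, (g p η)^2
          = ∫ η in Set.Ioc (0:ℝ) T, ∑ p ∈ s, (g p η)^2 :=
        (integral_finset_sum s fun p _ => hg2int p).symm
      have step4 : (∫ η in Set.Ioc (0:ℝ) T, ∑ p ∈ s, (g p η)^2)
          ≤ ∫ η in Set.Ioc (0:ℝ) T, (M^2 : ℝ) := by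
        refine integral_mono (integrable_finset_sum s fun p _ => hg2int p)
          (integrableOn_const measure_Ioc_lt_top.ne) ?_
        intro η
        have h5 : ∀ p : ℕ+, g p η = (w (Set.projIcc 0 a ha.le η)) p := fun p => rfl
        have hnc := lp_normsq (w (Set.projIcc 0 a ha.le η))
        calc ∑ p ∈ s, (g p η)^2
            = ∑ p ∈ s, ‖(w (Set.projIcc 0 a ha.le η)) p‖^2 := by
              refine Finset.sum_congr rfl fun p _ => ?_
              rw [h5 p, Real.norm_eq_abs, sq_abs]
          _ ≤ ∑' p : ℕ+, ‖(w (Set.projIcc 0 a ha.le η)) p‖^2 :=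
              Summable.sum_le_tsum s (fun p _ => by positivity) hnc.2
          _ = ‖w (Set.projIcc 0 a ha.le η)‖^2 := hnc.1.symm
          _ ≤ M^2 :=
              pow_le_pow_left₀ (norm_nonneg _) (ContinuousMap.norm_coe_le_norm w _) 2
      have step5 : ∫ η in Set.Ioc (0:ℝ) T, (M^2 : ℝ) = T * M^2 := by
        rw [integral_const, measureReal_def, hT2, ENNReal.toReal_ofReal ht0, smul_eq_mul]
      calc ∑ p ∈ s, ‖x p‖^2
          ≤ (1/(2*a))^2 * (T * ∑ p ∈ s, ∫ η in Set.Ioc (0:ℝ) T, (g p η)^2) := step2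
        _ ≤ (1/(2*a))^2 * (T * (T * M^2)) := by
            apply mul_le_mul_of_nonneg_left _ (by positivity)
            apply mul_le_mul_of_nonneg_left _ ht0
            rw [step3]
            exact step4.trans (le_of_eq step5)
        _ ≤ (1/2 * M)^2 := by
            have hTa : T * T ≤ a * a := mul_le_mul hta hta ht0 ha.le
            have ha2 : (0:ℝ) < a * a := by positivity
            have : (1/(2*a))^2 * (T * (T * M^2)) = (T*T) * (M^2 / (4 * (a*a))) := by
              field_simp; ring
            rw [this]
            have h6 : (T*T) * (M^2 / (4 * (a*a))) ≤ (a*a) * (M^2 / (4 * (a*a))) :=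
              mul_le_mul_of_nonneg_right hTa (by positivity)
            refine h6.trans (le_of_eq ?_)
            field_simp
            ring
    -- conclude
    have htsum : ∑' p : ℕ+, ‖x p‖^2 ≤ (1/2 * M)^2 :=
      Summable.tsum_le_of_sum_le (lp_normsq x).2 hsumle
    have hxn : ‖x‖^2 ≤ (1/2 * M)^2 := by rw [(lp_normsq x).1]; exact htsum
    have hfin := Real.sqrt_le_sqrt hxn
    rwa [Real.sqrt_sq (norm_nonneg x), Real.sqrt_sq (by positivity)] at hfin
  refine ⟨key, ?_⟩
  have hcontr : ContractingWith (1/2 : ℝ≥0) H := by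
    constructor
    · exact_mod_cast (by norm_num : ((1:ℝ)/2) < 1)
    · apply LipschitzWith.of_dist_le_mul
      intro v₁ v₂
      rw [dist_eq_norm, dist_eq_norm]
      have h := key v₁ v₂
      have hc : ((1/2 : ℝ≥0) : ℝ) = 1/2 := by norm_num
      rw [hc]
      exact h
  exact ⟨hcontr.fixedPoint H, hcontr.fixedPoint_isFixedPt,
    fun y hy => hcontr.fixedPoint_unique hy⟩
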